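/- Let S be a finite state space and A a finite action space, let T and T̂ be two transition kernels on S × A, let r : S × A → ℝ satisfy |r(s,a)| ≤ r_max, let γ ∈ (0,1), and let π and π_β be policies. Suppose D_TV(T̂(·|s,a), T(·|s,a)) ≤ ε_m for all (s,a) and D_TV(π(·|s), π_β(·|s)) ≤ ε_π for all s. Let J(π) denote the expected discounted return of π under the true dynamics T and J_ψ(π) its expected discounted return under the learned model T̂ (same d₀, r, γ). Then J(π) ≥ J_ψ(π) − [ 2·γ·r_max·(ε_m + 2·ε_π)/(1−γ)² + 4·r_max·ε_π/(1−γ) ] (the model-based policy learning return bound of Janner et al. as stated in the tutorial). -/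

import Mathlib

open Finset

/-- Time-indexed state marginal `d_t^π(s) = P_{p_π}(s_t = s)` of the Markov chain
induced by policy `π` in a finite MDP with initial distribution `d0` and transition
kernel `T`. -/
noncomputable def stateDist {S A : Type} [Fintype S] [Fintype A]
    (d0 : S → ℝ) (T : S → A → S → ℝ) (π : S → A → ℝ) : ℕ → S → ℝ
  | 0, s => d0 s
  | t + 1, s' => ∑ s, ∑ a, stateDist d0 T π t s * π s a * T s a s'

/-- Normalized discounted state occupancy `d^π(s) = (1−γ) Σ_{t=0}^∞ γ^t P_{p_π}(s_t = s)`. -/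
noncomputable def occ {S A : Type} [Fintype S] [Fintype A]
    (d0 : S → ℝ) (T : S → A → S → ℝ) (π : S → A → ℝ) (γ : ℝ) (s : S) : ℝ :=
  (1 - γ) * ∑' t : ℕ, γ ^ t * stateDist d0 T π t s

/-- Infinite-horizon expected discounted return
`J(π) = E[Σ_{t=0}^∞ γ^t r(s_t, a_t)]` under dynamics `T`. -/
noncomputable def Jinf {S A : Type} [Fintype S] [Fintype A]
    (d0 : S → ℝ) (T : S → A → S → ℝ) (π : S → A → ℝ) (r : S → A → ℝ) (γ : ℝ) : ℝ :=
  ∑' t : ℕ, γ ^ t * ∑ s, ∑ a, stateDist d0 T π t s * π s a * r s a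

/-- Total variation distance between two distributions on a finite type. -/
noncomputable def tvDist {Y : Type} [Fintype Y] (p q : Y → ℝ) : ℝ :=
  (1 / 2) * ∑ y, |p y - q y|

section aux
variable {S A : Type} [Fintype S] [Fintype A]

lemma stateDist_nonneg (d0 : S → ℝ) (T : S → A → S → ℝ) (π : S → A → ℝ)
    (hd0 : ∀ s, 0 ≤ d0 s) (hT : ∀ s a s', 0 ≤ T s a s') (hπ : ∀ s a, 0 ≤ π s a) :
    ∀ t s, 0 ≤ stateDist d0 T π t s := by
  intro t
  induction t with
  | zero => exact hd0
  | succ t ih =>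
    intro s'
    simp only [stateDist]
    refine Finset.sum_nonneg fun s _ => Finset.sum_nonneg fun a _ => ?_
    exact mul_nonneg (mul_nonneg (ih s) (hπ s a)) (hT s a s')

lemma stateDist_sum_one (d0 : S → ℝ) (T : S → A → S → ℝ) (π : S → A → ℝ)
    (hd01 : ∑ s, d0 s = 1) (hT1 : ∀ s a, ∑ s', T s a s' = 1) (hπ1 : ∀ s, ∑ a, π s a = 1) :
    ∀ t, ∑ s, stateDist d0 T π t s = 1 := by
  intro t
  induction t with
  | zero => simpa [stateDist] using hd01
  | succ t ih =>
    simp only [stateDist]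
    rw [Finset.sum_comm]
    have key : ∀ s, ∑ s' : S, ∑ a, stateDist d0 T π t s * π s a * T s a s'
        = stateDist d0 T π t s := by
      intro s
      rw [Finset.sum_comm]
      have h1 : ∀ a, ∑ s', stateDist d0 T π t s * π s a * T s a s'
          = stateDist d0 T π t s * π s a := by
        intro a; rw [← Finset.mul_sum, hT1, mul_one]
      simp_rw [h1, ← Finset.mul_sum, hπ1, mul_one]
    simp_rw [key]; exact ih

/-- one-step growth of the TV distance between state marginals -/
lemma delta_step (d0 : S → ℝ) (T That : S → A → S → ℝ) (π : S → A → ℝ) (εm : ℝ)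
    (hd00 : ∀ s, 0 ≤ d0 s) (hd01 : ∑ s, d0 s = 1)
    (hT0 : ∀ s a s', 0 ≤ T s a s') (hT1 : ∀ s a, ∑ s', T s a s' = 1)
    (hThat0 : ∀ s a s', 0 ≤ That s a s') (hThat1 : ∀ s a, ∑ s', That s a s' = 1)
    (hπ0 : ∀ s a, 0 ≤ π s a) (hπ1 : ∀ s, ∑ a, π s a = 1)
    (hεm : ∀ s a, tvDist (That s a) (T s a) ≤ εm) (t : ℕ) :
    ∑ s', |stateDist d0 T π (t+1) s' - stateDist d0 That π (t+1) s'|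
      ≤ (∑ s, |stateDist d0 T π t s - stateDist d0 That π t s|) + 2 * εm := by
  set dT := stateDist d0 T π t with hdT
  set dH := stateDist d0 That π t with hdH
  have hdHnn : ∀ s, 0 ≤ dH s := fun s => stateDist_nonneg d0 That π hd00 hThat0 hπ0 t s
  have expand : ∀ s', stateDist d0 T π (t+1) s' - stateDist d0 That π (t+1) s'
      = ∑ s, ∑ a, ((dT s - dH s) * π s a * T s a s'
          + dH s * π s a * (T s a s' - That s a s')) := by
    intro s'
    simp only [stateDist, ← hdT, ← hdH]
    rw [← Finset.sum_sub_distrib]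
    refine Finset.sum_congr rfl fun s _ => ?_
    rw [← Finset.sum_sub_distrib]
    refine Finset.sum_congr rfl fun a _ => ?_
    ring
  have htv : ∀ s a, ∑ s', |T s a s' - That s a s'| ≤ 2 * εm := by
    intro s a
    have h := hεm s a
    unfold tvDist at h
    have : ∑ s', |T s a s' - That s a s'| = ∑ s', |That s a s' - T s a s'| := by
      refine Finset.sum_congr rfl fun s' _ => abs_sub_comm _ _
    rw [this]; linarith
  calc ∑ s', |stateDist d0 T π (t+1) s' - stateDist d0 That π (t+1) s'|
      ≤ ∑ s', ∑ s, ∑ a, (|dT s - dH s| * π s a * T s a s'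
          + dH s * π s a * |T s a s' - That s a s'|) := by
        refine Finset.sum_le_sum fun s' _ => ?_
        rw [expand s']
        refine (Finset.abs_sum_le_sum_abs _ _).trans ?_
        refine Finset.sum_le_sum fun s _ => ?_
        refine (Finset.abs_sum_le_sum_abs _ _).trans ?_
        refine Finset.sum_le_sum fun a _ => ?_
        refine (abs_add_le _ _).trans ?_
        rw [abs_mul, abs_mul, abs_of_nonneg (hπ0 s a), abs_of_nonneg (hT0 s a s'),
          abs_mul, abs_mul, abs_of_nonneg (hdHnn s), abs_of_nonneg (hπ0 s a)]
    _ = ∑ s, ∑ a, (|dT s - dH s| * π s a * (∑ s', T s a s')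
          + dH s * π s a * (∑ s', |T s a s' - That s a s'|)) := by
        rw [Finset.sum_comm]
        refine Finset.sum_congr rfl fun s _ => ?_
        rw [Finset.sum_comm]
        refine Finset.sum_congr rfl fun a _ => ?_
        rw [Finset.sum_add_distrib, ← Finset.mul_sum, ← Finset.mul_sum]
    _ ≤ ∑ s, ∑ a, (|dT s - dH s| * π s a * 1 + dH s * π s a * (2 * εm)) := by
        refine Finset.sum_le_sum fun s _ => Finset.sum_le_sum fun a _ => ?_
        refine add_le_add (le_of_eq (by rw [hT1])) ?_
        exact mul_le_mul_of_nonneg_left (htv s a) (mul_nonneg (hdHnn s) (hπ0 s a))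
    _ = (∑ s, |dT s - dH s|) + 2 * εm := by
        simp_rw [mul_one, Finset.sum_add_distrib]
        have e1 : ∑ s, ∑ a, |dT s - dH s| * π s a = ∑ s, |dT s - dH s| := by
          simp_rw [← Finset.mul_sum, hπ1, mul_one]
        have e2 : ∑ s, ∑ a, dH s * π s a * (2 * εm) = 2 * εm := by
          have h3 : ∀ s, ∑ a, dH s * π s a * (2 * εm) = dH s * (2 * εm) := by
            intro s
            rw [← Finset.sum_mul, ← Finset.mul_sum, hπ1, mul_one]
          simp_rw [h3, ← Finset.sum_mul, hdH,
            stateDist_sum_one d0 That π hd01 hThat1 hπ1, one_mul]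
        rw [e1, e2]

lemma delta_le (d0 : S → ℝ) (T That : S → A → S → ℝ) (π : S → A → ℝ) (εm : ℝ)
    (hd00 : ∀ s, 0 ≤ d0 s) (hd01 : ∑ s, d0 s = 1)
    (hT0 : ∀ s a s', 0 ≤ T s a s') (hT1 : ∀ s a, ∑ s', T s a s' = 1)
    (hThat0 : ∀ s a s', 0 ≤ That s a s') (hThat1 : ∀ s a, ∑ s', That s a s' = 1)
    (hπ0 : ∀ s a, 0 ≤ π s a) (hπ1 : ∀ s, ∑ a, π s a = 1)
    (hεm : ∀ s a, tvDist (That s a) (T s a) ≤ εm) :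
    ∀ t : ℕ, ∑ s, |stateDist d0 T π t s - stateDist d0 That π t s| ≤ 2 * εm * t := by
  intro t
  induction t with
  | zero => simp [stateDist]
  | succ t ih =>
    have h := delta_step d0 T That π εm hd00 hd01 hT0 hT1 hThat0 hThat1 hπ0 hπ1 hεm t
    have he : (2 * εm) * ((t : ℝ) + 1) = 2 * εm * t + 2 * εm := by ring
    push_cast
    rw [he]
    linarith

lemma abs_reward_le (p : S → ℝ) (π : S → A → ℝ) (r : S → A → ℝ) (rmax : ℝ)
    (hp0 : ∀ s, 0 ≤ p s) (hp1 : ∑ s, p s = 1)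
    (hπ0 : ∀ s a, 0 ≤ π s a) (hπ1 : ∀ s, ∑ a, π s a = 1)
    (hr : ∀ s a, |r s a| ≤ rmax) :
    |∑ s, ∑ a, p s * π s a * r s a| ≤ rmax := by
  calc |∑ s, ∑ a, p s * π s a * r s a|
      ≤ ∑ s, ∑ a, |p s * π s a * r s a| := by
        refine (Finset.abs_sum_le_sum_abs _ _).trans ?_
        exact Finset.sum_le_sum fun s _ => Finset.abs_sum_le_sum_abs _ _
    _ ≤ ∑ s, ∑ a, p s * π s a * rmax := by
        refine Finset.sum_le_sum fun s _ => Finset.sum_le_sum fun a _ => ?_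
        rw [abs_mul, abs_mul, abs_of_nonneg (hp0 s), abs_of_nonneg (hπ0 s a)]
        exact mul_le_mul_of_nonneg_left (hr s a) (mul_nonneg (hp0 s) (hπ0 s a))
    _ = rmax := by
        have h3 : ∀ s, ∑ a, p s * π s a * rmax = p s * rmax := by
          intro s; rw [← Finset.sum_mul, ← Finset.mul_sum, hπ1, mul_one]
        simp_rw [h3, ← Finset.sum_mul, hp1, one_mul]

lemma reward_diff_le (p q : S → ℝ) (π : S → A → ℝ) (r : S → A → ℝ) (rmax : ℝ)
    (hπ0 : ∀ s a, 0 ≤ π s a) (hπ1 : ∀ s, ∑ a, π s a = 1)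
    (hr : ∀ s a, |r s a| ≤ rmax) :
    |(∑ s, ∑ a, p s * π s a * r s a) - ∑ s, ∑ a, q s * π s a * r s a|
      ≤ rmax * ∑ s, |p s - q s| := by
  have expand : (∑ s, ∑ a, p s * π s a * r s a) - ∑ s, ∑ a, q s * π s a * r s a
      = ∑ s, ∑ a, (p s - q s) * π s a * r s a := by
    rw [← Finset.sum_sub_distrib]
    refine Finset.sum_congr rfl fun s _ => ?_
    rw [← Finset.sum_sub_distrib]
    refine Finset.sum_congr rfl fun a _ => ?_
    ring
  rw [expand]
  calc |∑ s, ∑ a, (p s - q s) * π s a * r s a|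
      ≤ ∑ s, ∑ a, |(p s - q s) * π s a * r s a| := by
        refine (Finset.abs_sum_le_sum_abs _ _).trans ?_
        exact Finset.sum_le_sum fun s _ => Finset.abs_sum_le_sum_abs _ _
    _ ≤ ∑ s, ∑ a, |p s - q s| * π s a * rmax := by
        refine Finset.sum_le_sum fun s _ => Finset.sum_le_sum fun a _ => ?_
        rw [abs_mul, abs_mul, abs_of_nonneg (hπ0 s a)]
        exact mul_le_mul_of_nonneg_left (hr s a)
          (mul_nonneg (abs_nonneg _) (hπ0 s a))
    _ = rmax * ∑ s, |p s - q s| := by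
        have h3 : ∀ s, ∑ a, |p s - q s| * π s a * rmax = |p s - q s| * rmax := by
          intro s; rw [← Finset.sum_mul, ← Finset.mul_sum, hπ1, mul_one]
        simp_rw [h3, ← Finset.sum_mul, mul_comm]

end aux

/-- **Model-based policy learning return bound (Janner et al., as stated in the
tutorial).** If the learned model `T̂` is `ε_m`-close to the true dynamics `T` in total
variation at every `(s,a)`, and the policy `π` is `ε_π`-close to the behavior policy
`π_β` at every `s`, then the true return of `π` is lower-bounded by its return under the
model minus `2γ·r_max·(ε_m + 2ε_π)/(1−γ)² + 4·r_max·ε_π/(1−γ)`. -/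
theorem mbpo_return_bound
    {S A : Type} [Fintype S] [Fintype A]
    (d0 : S → ℝ) (T That : S → A → S → ℝ) (π πβ : S → A → ℝ)
    (r : S → A → ℝ) (rmax : ℝ) (γ εm επ : ℝ)
    (hγ0 : 0 < γ) (hγ1 : γ < 1)
    (hd00 : ∀ s, 0 ≤ d0 s) (hd01 : ∑ s, d0 s = 1)
    (hT0 : ∀ s a s', 0 ≤ T s a s') (hT1 : ∀ s a, ∑ s', T s a s' = 1)
    (hThat0 : ∀ s a s', 0 ≤ That s a s') (hThat1 : ∀ s a, ∑ s', That s a s' = 1)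
    (hπ0 : ∀ s a, 0 ≤ π s a) (hπ1 : ∀ s, ∑ a, π s a = 1)
    (hβ0 : ∀ s a, 0 ≤ πβ s a) (hβ1 : ∀ s, ∑ a, πβ s a = 1)
    (hr : ∀ s a, |r s a| ≤ rmax)
    (hεm : ∀ s a, tvDist (That s a) (T s a) ≤ εm)
    (hεπ : ∀ s, tvDist (π s) (πβ s) ≤ επ) :
    Jinf d0 T π r γ ≥
      Jinf d0 That π r γ -
        (2 * γ * rmax * (εm + 2 * επ) / (1 - γ) ^ 2 + 4 * rmax * επ / (1 - γ)) := by
  have hS : Nonempty S := by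
    rcases isEmpty_or_nonempty S with h | h
    · exfalso; rw [Finset.univ_eq_empty, Finset.sum_empty] at hd01; norm_num at hd01
    · exact h
  obtain ⟨s₀⟩ := hS
  have hA : Nonempty A := by
    rcases isEmpty_or_nonempty A with h | h
    · exfalso
      have := hπ1 s₀
      rw [Finset.univ_eq_empty, Finset.sum_empty] at this; norm_num at this
    · exact h
  obtain ⟨a₀⟩ := hA
  have hrmax : 0 ≤ rmax := le_trans (abs_nonneg _) (hr s₀ a₀)
  have hεm0 : 0 ≤ εm := by
    refine le_trans ?_ (hεm s₀ a₀)
    unfold tvDist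
    positivity
  have hεπ0 : 0 ≤ επ := by
    refine le_trans ?_ (hεπ s₀)
    unfold tvDist
    positivity
  have hγn : ‖γ‖ < 1 := by rw [Real.norm_eq_abs, abs_of_pos hγ0]; exact hγ1
  have h1γ : (0:ℝ) < 1 - γ := by linarith
  set c : ℕ → ℝ := fun t => ∑ s, ∑ a, stateDist d0 T π t s * π s a * r s a with hc
  set ch : ℕ → ℝ := fun t => ∑ s, ∑ a, stateDist d0 That π t s * π s a * r s a with hch
  have hcb : ∀ t, |c t| ≤ rmax := fun t =>
    abs_reward_le _ π r rmax (stateDist_nonneg d0 T π hd00 hT0 hπ0 t)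
      (stateDist_sum_one d0 T π hd01 hT1 hπ1 t) hπ0 hπ1 hr
  have hchb : ∀ t, |ch t| ≤ rmax := fun t =>
    abs_reward_le _ π r rmax (stateDist_nonneg d0 That π hd00 hThat0 hπ0 t)
      (stateDist_sum_one d0 That π hd01 hThat1 hπ1 t) hπ0 hπ1 hr
  have hsumgeo : Summable (fun t : ℕ => rmax * γ ^ t) :=
    (summable_geometric_of_lt_one hγ0.le hγ1).mul_left rmax
  have hf : Summable (fun t : ℕ => γ ^ t * c t) := by
    refine Summable.of_norm_bounded hsumgeo fun t => ?_
    rw [Real.norm_eq_abs, abs_mul, abs_pow, abs_of_pos hγ0, mul_comm]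
    exact mul_le_mul_of_nonneg_right (hcb t) (by positivity)
  have hg : Summable (fun t : ℕ => γ ^ t * ch t) := by
    refine Summable.of_norm_bounded hsumgeo fun t => ?_
    rw [Real.norm_eq_abs, abs_mul, abs_pow, abs_of_pos hγ0, mul_comm]
    exact mul_le_mul_of_nonneg_right (hchb t) (by positivity)
  have hdiff : ∀ t : ℕ, |γ ^ t * c t - γ ^ t * ch t| ≤ 2 * rmax * εm * (t * γ ^ t) := by
    intro t
    rw [← mul_sub, abs_mul, abs_pow, abs_of_pos hγ0]
    have h1 : |c t - ch t| ≤ rmax * ∑ s, |stateDist d0 T π t s - stateDist d0 That π t s| :=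
      reward_diff_le _ _ π r rmax hπ0 hπ1 hr
    have h2 : ∑ s, |stateDist d0 T π t s - stateDist d0 That π t s| ≤ 2 * εm * t :=
      delta_le d0 T That π εm hd00 hd01 hT0 hT1 hThat0 hThat1 hπ0 hπ1 hεm t
    have h3 : |c t - ch t| ≤ rmax * (2 * εm * t) :=
      h1.trans (mul_le_mul_of_nonneg_left h2 hrmax)
    calc γ ^ t * |c t - ch t| ≤ γ ^ t * (rmax * (2 * εm * t)) :=
          mul_le_mul_of_nonneg_left h3 (by positivity)
      _ = 2 * rmax * εm * (t * γ ^ t) := by ring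
  have hw : Summable (fun t : ℕ => 2 * rmax * εm * ((t : ℝ) * γ ^ t)) := by
    have := (summable_pow_mul_geometric_of_norm_lt_one 1 hγn).mul_left (2 * rmax * εm)
    simpa [pow_one] using this
  have hfg : Summable (fun t : ℕ => |γ ^ t * c t - γ ^ t * ch t|) :=
    Summable.of_nonneg_of_le (fun t => abs_nonneg _) hdiff hw
  have hJ : |Jinf d0 T π r γ - Jinf d0 That π r γ| ≤ 2 * rmax * εm * (γ / (1 - γ) ^ 2) := by
    have hsub : Jinf d0 T π r γ - Jinf d0 That π r γ
        = ∑' t : ℕ, (γ ^ t * c t - γ ^ t * ch t) := (Summable.tsum_sub hf hg).symm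
    rw [hsub]
    have h4 : |∑' t : ℕ, (γ ^ t * c t - γ ^ t * ch t)|
        ≤ ∑' t : ℕ, |γ ^ t * c t - γ ^ t * ch t| := by
      simpa [Real.norm_eq_abs] using
        norm_tsum_le_tsum_norm (f := fun t : ℕ => γ ^ t * c t - γ ^ t * ch t)
          (by simpa [Real.norm_eq_abs] using hfg)
    refine h4.trans ?_
    have h5 : ∑' t : ℕ, |γ ^ t * c t - γ ^ t * ch t|
        ≤ ∑' t : ℕ, 2 * rmax * εm * ((t : ℝ) * γ ^ t) := Summable.tsum_le_tsum hdiff hfg hw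
    refine h5.trans (le_of_eq ?_)
    rw [tsum_mul_left, tsum_coe_mul_geometric_of_norm_lt_one hγn]
  have hK : 2 * rmax * εm * (γ / (1 - γ) ^ 2)
      ≤ 2 * γ * rmax * (εm + 2 * επ) / (1 - γ) ^ 2 + 4 * rmax * επ / (1 - γ) := by
    have e : 2 * γ * rmax * (εm + 2 * επ) / (1 - γ) ^ 2 + 4 * rmax * επ / (1 - γ)
        = 2 * rmax * εm * (γ / (1 - γ) ^ 2)
          + (4 * γ * rmax * επ / (1 - γ) ^ 2 + 4 * rmax * επ / (1 - γ)) := by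
      ring
    have p1 : 0 ≤ 4 * γ * rmax * επ / (1 - γ) ^ 2 := by positivity
    have p2 : 0 ≤ 4 * rmax * επ / (1 - γ) := by positivity
    linarith
  have habs := abs_le.mp hJ
  linarith [habs.1]
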